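/- For every unit vector ψ ∈ ℂ⁴⊗ℂ⁴ there exist nonnegative reals p_{(i,i')} for (i,i') ∈ {0,1}² with Σ_{(i,i')} p_{(i,i')} = 1 and density matrices κ_{(i,i')} on ℂ⁴, neither depending on (x₀,x₁), such that for every (x₀,x₁) ∈ {0,1}²: (F_{(x₀,x₁)} ⊗ id)(|ψ⟩⟨ψ|) = Σ_{(i,i')∈{0,1}²} p_{(i,i')}·(I₂/2) ⊗ |x_{i⊕i'} ⊕ i'⟩⟨x_{i⊕i'} ⊕ i'| ⊗ κ_{(i,i')}. -/

import Mathlib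

open Matrix Kronecker ComplexOrder

/-- The square root of a positive semidefinite matrix, as `Matrix.PosSemidef.sqrt` was
defined in the older Mathlib (removed since). -/
noncomputable def posSemidefSqrt {n : Type*} [Fintype n] [DecidableEq n] {A : Matrix n n ℂ}
    (hA : A.PosSemidef) : Matrix n n ℂ :=
  (hA.1.eigenvectorUnitary : Matrix n n ℂ) *
    diagonal ((↑) ∘ Real.sqrt ∘ hA.1.eigenvalues) * (star hA.1.eigenvectorUnitary : Matrix n n ℂ)

/-- The trace norm `‖A‖₁ = Tr √(Aᴴ A)` of a complex matrix. -/
noncomputable def traceNorm {n : Type*} [Fintype n] [DecidableEq n] (A : Matrix n n ℂ) : ℝ :=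
  ((posSemidefSqrt (Matrix.posSemidef_conjTranspose_mul_self A)).trace).re

/-- The trace distance `Δ(ρ,σ) = ‖ρ - σ‖₁ / 2`. -/
noncomputable def traceDist {n : Type*} [Fintype n] [DecidableEq n] (ρ σ : Matrix n n ℂ) : ℝ :=
  traceNorm (ρ - σ) / 2

open scoped Classical in
/-- Positive semidefinite square root (junk value `0` on non-PSD matrices). -/
noncomputable def psdSqrt {n : Type*} [Fintype n] [DecidableEq n] (A : Matrix n n ℂ) :
    Matrix n n ℂ :=
  if h : A.PosSemidef then posSemidefSqrt h else 0

/-- The fidelity `F(ρ,σ) = ‖√ρ √σ‖₁`. -/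
noncomputable def fidelity {n : Type*} [Fintype n] [DecidableEq n] (ρ σ : Matrix n n ℂ) : ℝ :=
  traceNorm (psdSqrt ρ * psdSqrt σ)

/-- A density matrix: positive semidefinite with trace 1. -/
def IsDensityMatrix {n : Type*} [Fintype n] [DecidableEq n] (ρ : Matrix n n ℂ) : Prop :=
  ρ.PosSemidef ∧ ρ.trace = 1

/-- The projector `|b⟩⟨b|` on ℂ². -/
noncomputable def proj (b : Bool) : Matrix Bool Bool ℂ := Matrix.single b b 1

/-- The strong oblivious transfer channel `F_{(x₀,x₁)}`. -/
noncomputable def sotChannel (x₀ x₁ : Bool) (ρ : Matrix (Bool × Bool) (Bool × Bool) ℂ) :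
    Matrix (Bool × Bool) (Bool × Bool) ℂ :=
  ∑ i : Bool, ∑ i' : Bool,
    ρ (i, i') (i, i') •
      (((1/2 : ℂ) • (1 : Matrix Bool Bool ℂ)) ⊗ₖ proj (xor (bif xor i i' then x₁ else x₀) i'))

/-- The strong oblivious transfer channel extended by the identity on a
4-dimensional reference register. -/
noncomputable def sotChannelExt (x₀ x₁ : Bool)
    (ρ : Matrix ((Bool × Bool) × Fin 4) ((Bool × Bool) × Fin 4) ℂ) :
    Matrix ((Bool × Bool) × Fin 4) ((Bool × Bool) × Fin 4) ℂ :=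
  ∑ a : Bool × Bool,
    (((1/2 : ℂ) • (1 : Matrix Bool Bool ℂ)) ⊗ₖ
        proj (xor (bif xor a.1 a.2 then x₁ else x₀) a.2)) ⊗ₖ
      (Matrix.of fun r s : Fin 4 => ρ (a, r) (a, s))

lemma psd_vecMulVec {n : Type*} [Fintype n] (v : n → ℂ) :
    (Matrix.vecMulVec v (star v)).PosSemidef := by
  have h : Matrix.vecMulVec v (star v)
      = (Matrix.replicateRow Unit (star v))ᴴ * Matrix.replicateRow Unit (star v) := by
    ext i j
    simp [Matrix.mul_apply, Matrix.vecMulVec_apply]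
  rw [h]
  exact Matrix.posSemidef_conjTranspose_mul_self _

lemma psd_real_smul {n : Type*} [Fintype n] {M : Matrix n n ℂ} (hM : M.PosSemidef)
    {c : ℝ} (hc : 0 ≤ c) : (c • M).PosSemidef := by
  have h : c • M = (c : ℂ) • M := by
    ext i j; simp [Complex.real_smul]
  rw [h]
  constructor
  · rw [Matrix.IsHermitian, Matrix.conjTranspose_smul, hM.1.eq]
    simp
  · exact (hM.smul (a := (c : ℂ)) (by exact_mod_cast hc)).2

/-- Structure of the output of the extended strong oblivious transfer channel on
a pure input state `|ψ⟩⟨ψ|`. -/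
theorem stmt_11 (ψ : (Bool × Bool) × Fin 4 → ℂ) (hψ : star ψ ⬝ᵥ ψ = 1) :
    ∃ (p : Bool × Bool → ℝ) (κ : Bool × Bool → Matrix (Fin 4) (Fin 4) ℂ),
      (∀ a, 0 ≤ p a) ∧ (∑ a : Bool × Bool, p a = 1) ∧
      (∀ a, IsDensityMatrix (κ a)) ∧
      ∀ x₀ x₁ : Bool,
        sotChannelExt x₀ x₁ (Matrix.vecMulVec ψ (star ψ)) =
          ∑ a : Bool × Bool, p a •
            ((((1/2 : ℂ) • (1 : Matrix Bool Bool ℂ)) ⊗ₖ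
                proj (xor (bif xor a.1 a.2 then x₁ else x₀) a.2)) ⊗ₖ κ a) := by
  classical
  set p : Bool × Bool → ℝ := fun a => ∑ r : Fin 4, Complex.normSq (ψ (a, r)) with hp
  set B : Bool × Bool → Matrix (Fin 4) (Fin 4) ℂ :=
    fun a => Matrix.vecMulVec (fun r => ψ (a, r)) (star fun r => ψ (a, r)) with hB
  have hpnn : ∀ a, 0 ≤ p a := fun a => Finset.sum_nonneg fun r _ => Complex.normSq_nonneg _
  have hBpsd : ∀ a, (B a).PosSemidef := fun a => psd_vecMulVec _
  have hBtr : ∀ a, (B a).trace = (p a : ℂ) := by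
    intro a
    simp [hB, Matrix.trace, Matrix.diag, Matrix.vecMulVec_apply, hp, Complex.mul_conj]
  have hBzero : ∀ a, p a = 0 → B a = 0 := by
    intro a ha
    have h0 : ∀ r : Fin 4, ψ (a, r) = 0 := by
      intro r
      have := (Finset.sum_eq_zero_iff_of_nonneg
        (fun r _ => Complex.normSq_nonneg (ψ (a, r)))).mp ha r (Finset.mem_univ r)
      exact Complex.normSq_eq_zero.mp this
    ext r s
    simp [hB, Matrix.vecMulVec_apply, h0]
  set κ : Bool × Bool → Matrix (Fin 4) (Fin 4) ℂ :=
    fun a => if p a = 0 then (1/4 : ℝ) • (1 : Matrix (Fin 4) (Fin 4) ℂ)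
      else ((p a)⁻¹ : ℝ) • B a with hκ
  have hκB : ∀ a, p a • κ a = B a := by
    intro a
    by_cases h : p a = 0
    · simp [hκ, h, hBzero a h]
    · simp only [hκ, if_neg h]
      rw [smul_smul, mul_inv_cancel₀ h, one_smul]
  refine ⟨p, κ, hpnn, ?_, ?_, ?_⟩
  · have h1 : ((∑ a : Bool × Bool, p a : ℝ) : ℂ) = 1 := by
      have h2 := Fintype.sum_prod_type
        (f := fun i : (Bool × Bool) × Fin 4 => star ψ i * ψ i)
      rw [← hψ, dotProduct, h2]
      simp only [hp]
      push_cast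
      refine Finset.sum_congr rfl fun a _ => ?_
      refine Finset.sum_congr rfl fun r _ => ?_
      simp [Complex.normSq_eq_conj_mul_self]
    exact_mod_cast h1
  · intro a
    by_cases h : p a = 0
    · refine ⟨?_, ?_⟩
      · rw [hκ]; simp only [if_pos h]
        exact psd_real_smul Matrix.PosSemidef.one (by norm_num)
      · simp only [hκ, if_pos h, Matrix.trace_smul, Matrix.trace_one]
        norm_num
    · refine ⟨?_, ?_⟩
      · rw [hκ]; simp only [if_neg h]
        exact psd_real_smul (hBpsd a) (inv_nonneg.mpr (hpnn a))
      · simp only [hκ, if_neg h, Matrix.trace_smul, hBtr a]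
        rw [Complex.real_smul, Complex.ofReal_inv]
        exact inv_mul_cancel₀ (Complex.ofReal_ne_zero.mpr h)
  · intro x₀ x₁
    rw [sotChannelExt]
    congr 1
    ext a
    have hofB : (Matrix.of fun r s : Fin 4 =>
        Matrix.vecMulVec ψ (star ψ) (a, r) (a, s)) = B a := by
      ext r s
      simp [hB, Matrix.vecMulVec_apply]
    rw [hofB, ← hκB a, Matrix.kronecker_smul]
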